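/- The set of positive integers of the form 2^a · p^b, where p is an odd prime and a, b ≥ 0, has natural density zero. -/

import Mathlib

open Filter Topology
open scoped Classical

section PartA
open Finset Nat
open scoped Classical

lemma one_le_log2 {k : ℕ} (hk : 2 ≤ k) : 1 ≤ Nat.log 2 k :=
  Nat.le_log_of_pow_le one_lt_two (by simpa using hk)

lemma prime_count_le (k n : ℕ) (hk : 2 ≤ k) :
    ((Finset.Icc 1 n).filter Nat.Prime).card ≤ k + 2 * n / Nat.log 2 k := by
  classical
  set t := Nat.log 2 k with ht
  have ht1 : 1 ≤ t := one_le_log2 hk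
  set A := ((Finset.Icc 1 n).filter Nat.Prime).filter (fun p => k < p) with hA
  have hsplit : ((Finset.Icc 1 n).filter Nat.Prime).card ≤ k + A.card := by
    have hsub : (Finset.Icc 1 n).filter Nat.Prime ⊆ Finset.Icc 1 k ∪ A := by
      intro x hx
      simp only [Finset.mem_union, hA, Finset.mem_filter, Finset.mem_Icc] at hx ⊢
      rcases le_or_gt x k with h | h
      · exact Or.inl ⟨hx.1.1, h⟩
      · exact Or.inr ⟨hx, h⟩
    calc ((Finset.Icc 1 n).filter Nat.Prime).card ≤ (Finset.Icc 1 k ∪ A).card :=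
          Finset.card_le_card hsub
      _ ≤ (Finset.Icc 1 k).card + A.card := Finset.card_union_le _ _
      _ ≤ k + A.card := by simp [Nat.card_Icc]
  refine hsplit.trans (Nat.add_le_add_left ?_ k)
  have hprod : (∏ p ∈ A, p) ≤ 4 ^ n := by
    refine le_trans ?_ (primorial_le_4_pow n)
    rw [primorial]
    apply Finset.prod_le_prod_of_subset_of_one_le'
    · intro x hx
      simp only [hA, Finset.mem_filter, Finset.mem_Icc, Finset.mem_range] at hx ⊢
      exact ⟨by omega, hx.1.2⟩
    · intro i hi _
      exact (Finset.mem_filter.mp hi).2.one_lt.le.trans' (by norm_num)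
  have hpow : k ^ A.card ≤ ∏ p ∈ A, p := by
    apply Finset.pow_card_le_prod
    intro p hp
    simp only [hA, Finset.mem_filter] at hp
    exact hp.2.le
  have h2t : 2 ^ t ≤ k := Nat.pow_log_le_self 2 (by omega)
  have hkey : 2 ^ (t * A.card) ≤ 2 ^ (2 * n) := by
    calc 2 ^ (t * A.card) = (2 ^ t) ^ A.card := by rw [pow_mul]
    _ ≤ k ^ A.card := Nat.pow_le_pow_left h2t _
    _ ≤ ∏ p ∈ A, p := hpow
    _ ≤ 4 ^ n := hprod
    _ = 2 ^ (2 * n) := by rw [pow_mul]; norm_num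
  have h3 := (Nat.pow_le_pow_iff_right one_lt_two).mp hkey
  rw [Nat.le_div_iff_mul_le (by omega), mul_comm]
  exact h3

noncomputable def OPP (M : ℕ) : Finset ℕ :=
  (Finset.Icc 1 M).filter (fun m => ∃ p b : ℕ, p.Prime ∧ p ≠ 2 ∧ 1 ≤ b ∧ m = p ^ b)

lemma opp_card_le (N M : ℕ) (hMN : M ≤ N) :
    (OPP M).card ≤ ((Finset.Icc 1 M).filter Nat.Prime).card
      + (Nat.sqrt N + 1) * (Nat.log 2 N + 2) := by
  classical
  set L := Nat.log 2 N with hL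
  have hsub : OPP M ⊆ ((Finset.Icc 1 M).filter Nat.Prime) ∪
      (Finset.image (fun q : ℕ × ℕ => q.1 ^ q.2)
        ((Finset.Icc 2 (Nat.sqrt N)) ×ˢ (Finset.Icc 2 (L + 1)))) := by
    intro m hm
    simp only [OPP, Finset.mem_filter, Finset.mem_Icc] at hm
    obtain ⟨⟨hm1, hmM⟩, p, b, hp, hp2, hb1, rfl⟩ := hm
    rcases eq_or_lt_of_le hb1 with hb | hb
    · apply Finset.mem_union_left
      simp only [Finset.mem_filter, Finset.mem_Icc, ← hb, pow_one]
      exact ⟨⟨hp.one_lt.le, by simpa [← hb] using hmM⟩, hp⟩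
    · apply Finset.mem_union_right
      simp only [Finset.mem_image, Finset.mem_product, Finset.mem_Icc, Prod.exists]
      refine ⟨p, b, ⟨⟨hp.two_le, ?_⟩, ⟨hb, ?_⟩⟩, rfl⟩
      · rw [Nat.le_sqrt]
        calc p * p = p ^ 2 := (sq p).symm
        _ ≤ p ^ b := Nat.pow_le_pow_right hp.pos hb
        _ ≤ N := hmM.trans hMN
      · have h2b : 2 ^ b ≤ N := by
          calc 2 ^ b ≤ p ^ b := Nat.pow_le_pow_left hp.two_le b
          _ ≤ N := hmM.trans hMN
        have := Nat.le_log_of_pow_le one_lt_two h2b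
        omega
  calc (OPP M).card ≤ _ := Finset.card_le_card hsub
    _ ≤ ((Finset.Icc 1 M).filter Nat.Prime).card +
        (Finset.image (fun q : ℕ × ℕ => q.1 ^ q.2)
          ((Finset.Icc 2 (Nat.sqrt N)) ×ˢ (Finset.Icc 2 (L + 1)))).card :=
        Finset.card_union_le _ _
    _ ≤ _ := by
        refine Nat.add_le_add_left ?_ _
        calc _ ≤ ((Finset.Icc 2 (Nat.sqrt N)) ×ˢ (Finset.Icc 2 (L + 1))).card :=
              Finset.card_image_le
        _ ≤ _ := by
            rw [Finset.card_product, Nat.card_Icc, Nat.card_Icc]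
            apply Nat.mul_le_mul <;> omega

lemma master (N : ℕ) :
    (((Finset.Icc 1 N).filter
        (fun n => ∃ a b p : ℕ, p.Prime ∧ p ≠ 2 ∧ n = 2 ^ a * p ^ b)).card) ≤
      (Nat.log 2 N + 1) +
        ∑ a ∈ Finset.range (Nat.log 2 N + 1), (OPP (N / 2 ^ a)).card := by
  classical
  set L := Nat.log 2 N with hL
  set T : Finset (ℕ × ℕ) :=
    (Finset.range (L + 1)).biUnion (fun a => {a} ×ˢ OPP (N / 2 ^ a)) with hT
  have hsub : ((Finset.Icc 1 N).filter
      (fun n => ∃ a b p : ℕ, p.Prime ∧ p ≠ 2 ∧ n = 2 ^ a * p ^ b)) ⊆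
      (Finset.image (fun a => 2 ^ a) (Finset.range (L + 1))) ∪
      (Finset.image (fun q : ℕ × ℕ => 2 ^ q.1 * q.2) T) := by
    intro n hn
    simp only [Finset.mem_filter, Finset.mem_Icc] at hn
    obtain ⟨⟨hn1, hnN⟩, a, b, p, hp, hp2, rfl⟩ := hn
    have hpb : 1 ≤ p ^ b := Nat.one_le_pow _ _ hp.pos
    have haL : a ≤ L := by
      apply Nat.le_log_of_pow_le one_lt_two
      calc 2 ^ a ≤ 2 ^ a * p ^ b := Nat.le_mul_of_pos_right _ (by omega)
      _ ≤ N := hnN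
    rcases Nat.eq_zero_or_pos b with hb | hb
    · apply Finset.mem_union_left
      simp only [Finset.mem_image, Finset.mem_range]
      exact ⟨a, by omega, by simp [hb]⟩
    · apply Finset.mem_union_right
      simp only [Finset.mem_image, hT, Finset.mem_biUnion, Finset.mem_range,
        Finset.mem_product, Finset.mem_singleton, Prod.exists]
      refine ⟨a, p ^ b, ⟨a, by omega, ?_⟩, rfl⟩
      simp only [OPP, Finset.mem_filter, Finset.mem_Icc, true_and]
      refine ⟨⟨hpb, ?_⟩, p, b, hp, hp2, hb, rfl⟩
      rw [Nat.le_div_iff_mul_le (by positivity)]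
      rw [mul_comm]
      exact hnN
  calc _ ≤ _ := Finset.card_le_card hsub
    _ ≤ (Finset.image (fun a => 2 ^ a) (Finset.range (L + 1))).card +
        (Finset.image (fun q : ℕ × ℕ => 2 ^ q.1 * q.2) T).card := Finset.card_union_le _ _
    _ ≤ (L + 1) + T.card := by
        apply Nat.add_le_add
        · exact Finset.card_image_le.trans (by simp)
        · exact Finset.card_image_le
    _ ≤ (L + 1) + ∑ a ∈ Finset.range (L + 1), (OPP (N / 2 ^ a)).card := by
        refine Nat.add_le_add_left ?_ _
        rw [hT, Finset.card_biUnion]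
        · apply le_of_eq
          apply Finset.sum_congr rfl
          intro a _
          rw [Finset.card_product, Finset.card_singleton, one_mul]
        · intro x _ y _ hxy
          simp only [Finset.disjoint_left, Finset.mem_product, Finset.mem_singleton]
          rintro ⟨c, m⟩ ⟨rfl, -⟩ ⟨rfl, -⟩
          exact hxy rfl
end PartA

section PartB
open Finset Nat Filter Real
open scoped Classical



lemma real_bound (k N : ℕ) (hk : 2 ≤ k) :
    (((Finset.Icc 1 N).filter
        (fun n => ∃ a b p : ℕ, p.Prime ∧ p ≠ 2 ∧ n = 2 ^ a * p ^ b)).card : ℝ) ≤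
      ((k:ℝ) + 2) * ((Nat.log 2 N : ℝ) + 2)^2 * (Real.sqrt N + 2)
        + 4 * N / (Nat.log 2 k) := by
  classical
  set L := Nat.log 2 N with hL
  set t := Nat.log 2 k with ht
  have ht1 : 1 ≤ t := Nat.le_log_of_pow_le one_lt_two (by simpa using hk)
  have ht0 : (0:ℝ) < t := by exact_mod_cast ht1
  have h2 : ∀ a : ℕ, (OPP (N / 2 ^ a)).card ≤
      (k + (Nat.sqrt N + 1) * (L + 2)) + 2 * (N / 2 ^ a) / t := by
    intro a
    have h1 := opp_card_le N (N / 2 ^ a) (Nat.div_le_self _ _)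
    have h2 := prime_count_le k (N / 2 ^ a) hk
    rw [← hL] at h1
    rw [← ht] at h2
    omega
  -- cast the sum
  have hsum : ((∑ a ∈ Finset.range (L + 1), (OPP (N / 2 ^ a)).card : ℕ) : ℝ) ≤
      ((L:ℝ) + 1) * ((k:ℝ) + (Real.sqrt N + 1) * ((L:ℝ) + 2)) + 4 * N / t := by
    push_cast
    have hterm : ∀ a ∈ Finset.range (L + 1), ((OPP (N / 2 ^ a)).card : ℝ) ≤
        ((k:ℝ) + (Real.sqrt N + 1) * ((L:ℝ) + 2)) + (2 * (N:ℝ) / t) * ((1:ℝ)/2) ^ a := by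
      intro a _
      have hc : ((OPP (N / 2 ^ a)).card : ℝ) ≤
          (((k + (Nat.sqrt N + 1) * (L + 2)) + 2 * (N / 2 ^ a) / t : ℕ) : ℝ) :=
        Nat.cast_le.mpr (h2 a)
      refine hc.trans ?_
      push_cast
      have hdiv1 : ((2 * (N / 2 ^ a) / t : ℕ) : ℝ) ≤ (2 * ((N:ℝ) / 2 ^ a)) / (t:ℝ) := by
        refine (Nat.cast_div_le).trans ?_
        apply div_le_div_of_nonneg_right ?_ ht0.le
        push_cast
        have : ((N / 2 ^ a : ℕ) : ℝ) ≤ (N:ℝ) / 2 ^ a := by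
          refine (Nat.cast_div_le).trans ?_
          push_cast
          exact le_rfl
        linarith [this]
      have hsqrt : ((Nat.sqrt N : ℕ) : ℝ) ≤ Real.sqrt N := Real.nat_sqrt_le_real_sqrt
      have heq : (2 * ((N:ℝ) / 2 ^ a)) / (t:ℝ) = (2 * (N:ℝ) / t) * ((1:ℝ)/2) ^ a := by
        rw [one_div, inv_pow]
        field_simp
      push_cast at hc ⊢
      have hL2 : (0:ℝ) ≤ (L:ℝ) + 2 := by positivity
      calc ((k:ℝ) + ((Nat.sqrt N : ℝ) + 1) * ((L:ℝ) + 2)) + ((2 * (N / 2 ^ a) / t : ℕ) : ℝ)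
          ≤ ((k:ℝ) + (Real.sqrt N + 1) * ((L:ℝ) + 2)) + (2 * ((N:ℝ) / 2 ^ a)) / (t:ℝ) := by
            apply add_le_add ?_ hdiv1
            apply add_le_add_right
            apply mul_le_mul_of_nonneg_right (by linarith) hL2
        _ = ((k:ℝ) + (Real.sqrt N + 1) * ((L:ℝ) + 2)) + (2 * (N:ℝ) / t) * ((1:ℝ)/2) ^ a := by
            rw [heq]
    calc (∑ a ∈ Finset.range (L + 1), ((OPP (N / 2 ^ a)).card : ℝ))
        ≤ ∑ a ∈ Finset.range (L + 1),
          (((k:ℝ) + (Real.sqrt N + 1) * ((L:ℝ) + 2)) + (2 * (N:ℝ) / t) * ((1:ℝ)/2) ^ a) :=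
          Finset.sum_le_sum hterm
      _ = ((L:ℝ) + 1) * ((k:ℝ) + (Real.sqrt N + 1) * ((L:ℝ) + 2))
          + (2 * (N:ℝ) / t) * ∑ a ∈ Finset.range (L + 1), ((1:ℝ)/2) ^ a := by
          rw [Finset.sum_add_distrib, Finset.sum_const, Finset.card_range, ← Finset.mul_sum]
          push_cast
          ring
      _ ≤ ((L:ℝ) + 1) * ((k:ℝ) + (Real.sqrt N + 1) * ((L:ℝ) + 2)) + (2 * (N:ℝ) / t) * 2 := by
          apply add_le_add_right
          apply mul_le_mul_of_nonneg_left ?_ (by positivity)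
          have := geom_sum_eq (by norm_num : (1:ℝ)/2 ≠ 1) (L + 1)
          rw [this]
          have h' : ((1:ℝ)/2)^(L+1) ≥ 0 := by positivity
          rw [div_le_iff_of_neg (by norm_num : (1:ℝ)/2 - 1 < 0)]
          linarith
      _ ≤ _ := by
          apply add_le_add_right
          exact le_of_eq (by ring)
  -- combine
  have hmaster := master N
  have hcast : (((Finset.Icc 1 N).filter
      (fun n => ∃ a b p : ℕ, p.Prime ∧ p ≠ 2 ∧ n = 2 ^ a * p ^ b)).card : ℝ) ≤
      ((L:ℝ) + 1) + (((∑ a ∈ Finset.range (L + 1), (OPP (N / 2 ^ a)).card : ℕ)) : ℝ) := by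
    exact_mod_cast hmaster
  refine hcast.trans ((add_le_add_right hsum _).trans ?_)
  have hXnn : (0:ℝ) ≤ (L:ℝ) := Nat.cast_nonneg _
  have hKnn : (2:ℝ) ≤ (k:ℝ) := by exact_mod_cast hk
  have hK0 : (0:ℝ) ≤ (k:ℝ) := by linarith
  have hSnn : (0:ℝ) ≤ Real.sqrt N := Real.sqrt_nonneg _
  have key : ((L:ℝ) + 1) + ((L:ℝ) + 1) * ((k:ℝ) + (Real.sqrt N + 1) * ((L:ℝ) + 2)) ≤
      ((k:ℝ) + 2) * ((L:ℝ) + 2)^2 * (Real.sqrt N + 2) := by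
    nlinarith [mul_nonneg hXnn hSnn, mul_nonneg (mul_nonneg hXnn hXnn) hSnn,
      mul_nonneg hXnn hXnn, mul_nonneg (mul_nonneg hXnn hSnn) hK0,
      mul_nonneg hXnn hK0, mul_nonneg hSnn hK0,
      mul_nonneg (mul_nonneg (mul_nonneg hXnn hXnn) hSnn) hK0]
  linarith
end PartB

section PartC
open Filter Topology Real

-- real-function limit
lemma tendsto_freal (c : ℝ) (hc : 0 ≤ c) :
    Tendsto (fun x : ℝ => c * (Real.logb 2 x + 2)^2 * (Real.sqrt x + 2) / x)
      atTop (nhds 0) := by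
  have hlim : Tendsto (fun x : ℝ => (27 * c) * (Real.log x ^ (2:ℝ) / x ^ ((1:ℝ)/2)))
      atTop (nhds 0) := by
    have := ((isLittleO_log_rpow_rpow_atTop (s := (1:ℝ)/2) 2
      (by norm_num)).tendsto_div_nhds_zero).const_mul (27 * c)
    simpa using this
  apply squeeze_zero' ?_ ?_ hlim
  · filter_upwards [eventually_ge_atTop (1:ℝ)] with x hx
    have hx0 : (0:ℝ) < x := by linarith
    have : (0:ℝ) ≤ Real.sqrt x + 2 := by positivity
    exact div_nonneg (mul_nonneg (mul_nonneg hc (sq_nonneg _)) this) hx0.le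
  · filter_upwards [eventually_ge_atTop (Real.exp 2)] with x hx
    have hx1 : (1:ℝ) ≤ x := le_trans (by nlinarith [Real.exp_one_gt_d9, Real.exp_le_exp.mpr (by norm_num : (1:ℝ) ≤ 2)]) hx
    have hx0 : (0:ℝ) < x := by linarith
    have hlog2 : (2:ℝ) ≤ Real.log x := (Real.le_log_iff_exp_le hx0).mpr hx
    have hlogb : Real.logb 2 x ≤ 2 * Real.log x := by
      rw [Real.logb, div_le_iff₀ (Real.log_pos one_lt_two)]
      nlinarith [Real.log_two_gt_d9]
    have hA : (Real.logb 2 x + 2)^2 ≤ 9 * (Real.log x)^2 := by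
      have h0 : 0 ≤ Real.logb 2 x := Real.logb_nonneg one_lt_two hx1
      nlinarith
    have hs1 : (1:ℝ) ≤ Real.sqrt x := by
      rw [show (1:ℝ) = Real.sqrt 1 by simp]
      exact Real.sqrt_le_sqrt hx1
    have hB : Real.sqrt x + 2 ≤ 3 * Real.sqrt x := by linarith
    have hsq : Real.sqrt x * Real.sqrt x = x := Real.mul_self_sqrt hx0.le
    have hs0 : 0 < Real.sqrt x := by linarith
    calc c * (Real.logb 2 x + 2)^2 * (Real.sqrt x + 2) / x
        ≤ c * (9 * (Real.log x)^2) * (3 * Real.sqrt x) / x := by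
          have h9 : (0:ℝ) ≤ 9 * (Real.log x)^2 := by positivity
          have hBpos : (0:ℝ) ≤ Real.sqrt x + 2 := by positivity
          apply div_le_div_of_nonneg_right ?_ hx0.le |>.trans_eq rfl
          calc c * (Real.logb 2 x + 2)^2 * (Real.sqrt x + 2)
              ≤ c * (9 * (Real.log x)^2) * (Real.sqrt x + 2) := by
                apply mul_le_mul_of_nonneg_right ?_ hBpos
                exact mul_le_mul_of_nonneg_left hA hc
            _ ≤ c * (9 * (Real.log x)^2) * (3 * Real.sqrt x) := by
                apply mul_le_mul_of_nonneg_left hB (mul_nonneg hc h9)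
      _ = (27 * c) * ((Real.log x)^2 * (Real.sqrt x / x)) := by ring
      _ = (27 * c) * (Real.log x ^ (2:ℝ) / x ^ ((1:ℝ)/2)) := by
          have hdiv : Real.sqrt x / x = 1 / Real.sqrt x := by
            rw [div_eq_div_iff hx0.ne' hs0.ne', hsq]; ring
          rw [hdiv, ← Real.rpow_natCast (Real.log x) 2, ← Real.sqrt_eq_rpow]
          push_cast
          ring
end PartC

section PartD
open Finset Nat Filter Real Topology
open scoped Classical

lemma tendsto_bound (c : ℝ) (hc : 0 ≤ c) :
    Tendsto (fun N : ℕ => c * ((Nat.log 2 N : ℝ) + 2)^2 * (Real.sqrt N + 2) / N)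
      atTop (nhds 0) := by
  have hcomp : Tendsto (fun N : ℕ =>
      c * (Real.logb 2 (N:ℝ) + 2)^2 * (Real.sqrt (N:ℝ) + 2) / (N:ℝ)) atTop (nhds 0) :=
    (tendsto_freal c hc).comp tendsto_natCast_atTop_atTop
  apply squeeze_zero' ?_ ?_ hcomp
  · filter_upwards [eventually_ge_atTop 1] with N hN
    have : (0:ℝ) < N := by exact_mod_cast hN
    have h2 : (0:ℝ) ≤ Real.sqrt N + 2 := by positivity
    exact div_nonneg (mul_nonneg (mul_nonneg hc (sq_nonneg _)) h2) this.le
  · filter_upwards [eventually_ge_atTop 1] with N hN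
    have hN0 : (0:ℝ) < N := by exact_mod_cast hN
    have hlog : ((Nat.log 2 N : ℕ) : ℝ) ≤ Real.logb 2 N := Real.natLog_le_logb N 2
    have hlogb0 : (0:ℝ) ≤ (Nat.log 2 N : ℝ) := Nat.cast_nonneg _
    have h2 : (0:ℝ) ≤ Real.sqrt N + 2 := by positivity
    apply div_le_div_of_nonneg_right ?_ hN0.le
    apply mul_le_mul_of_nonneg_right ?_ h2
    apply mul_le_mul_of_nonneg_left ?_ hc
    have : ((Nat.log 2 N : ℝ) + 2) ≤ Real.logb 2 N + 2 := by linarith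
    nlinarith [hlogb0]

/-- The set of positive integers of the form `2^a · p^b` with `p` an
odd prime and `a, b ≥ 0` has natural density zero. -/
theorem stmt9 :
    Tendsto (fun N : ℕ =>
      (((Finset.Icc 1 N).filter
          (fun n => ∃ a b p : ℕ, p.Prime ∧ p ≠ 2 ∧ n = 2 ^ a * p ^ b)).card : ℝ) / N)
    atTop (nhds 0) := by
  rw [tendsto_order]
  constructor
  · intro x hx
    filter_upwards with N
    have : (0:ℝ) ≤ (((Finset.Icc 1 N).filter
        (fun n => ∃ a b p : ℕ, p.Prime ∧ p ≠ 2 ∧ n = 2 ^ a * p ^ b)).card : ℝ) / N :=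
      div_nonneg (Nat.cast_nonneg _) (Nat.cast_nonneg _)
    linarith
  · intro ε hε
    set T : ℕ := ⌈(8:ℝ)/ε⌉₊ + 1 with hT
    set k : ℕ := 2 ^ T with hk
    have hk2 : 2 ≤ k := by
      rw [hk]
      calc 2 = 2 ^ 1 := (pow_one 2).symm
      _ ≤ 2 ^ T := Nat.pow_le_pow_right (by norm_num) (by omega)
    have hlogk : Nat.log 2 k = T := by rw [hk, Nat.log_pow one_lt_two]
    have hT0 : (0:ℝ) < T := by positivity
    have h4T : 4 / (T:ℝ) ≤ ε / 2 := by
      rw [div_le_iff₀ hT0]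
      have h8 : (8:ℝ)/ε ≤ T := by
        rw [hT]
        push_cast
        have := Nat.le_ceil ((8:ℝ)/ε)
        linarith
      rw [div_le_iff₀ hε] at h8
      nlinarith
    have hbnd := tendsto_bound ((k:ℝ) + 2) (by positivity)
    filter_upwards [hbnd.eventually (gt_mem_nhds (show (0:ℝ) < ε/2 by linarith)),
      eventually_ge_atTop 1] with N hN1 hN2
    have hN0 : (0:ℝ) < N := by exact_mod_cast hN2
    have hrb := real_bound k N hk2
    rw [hlogk] at hrb
    have hdiv : (((Finset.Icc 1 N).filter
        (fun n => ∃ a b p : ℕ, p.Prime ∧ p ≠ 2 ∧ n = 2 ^ a * p ^ b)).card : ℝ) / N ≤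
        (((k:ℝ) + 2) * ((Nat.log 2 N : ℝ) + 2)^2 * (Real.sqrt N + 2)
          + 4 * N / (T:ℝ)) / N := by
      apply div_le_div_of_nonneg_right hrb hN0.le
    have hsplit : (((k:ℝ) + 2) * ((Nat.log 2 N : ℝ) + 2)^2 * (Real.sqrt N + 2)
          + 4 * N / (T:ℝ)) / N =
        ((k:ℝ) + 2) * ((Nat.log 2 N : ℝ) + 2)^2 * (Real.sqrt N + 2) / N + 4 / (T:ℝ) := by
      field_simp
    rw [hsplit] at hdiv
    calc _ ≤ _ := hdiv
    _ < ε/2 + ε/2 := by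
        apply add_lt_add_of_lt_of_le hN1 h4T
    _ = ε := by ring
end PartD
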